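/- Merkle verification is complete: for any list of data blocks x₁,...,xₙ, if M = Mtree(x₁,...,xₙ) with root r, then for every index i, Mvrfy(i, r, xᵢ, Mproof(M, i)) = true. -/

import Mathlib

/-- A perfect binary tree of depth `k` with data blocks at the leaves. -/
inductive PTree (β : Type) : ℕ → Type
  | leaf : β → PTree β 0
  | node : {k : ℕ} → PTree β k → PTree β k → PTree β (k + 1)

variable {α β : Type}

/-- The Merkle root of a tree: leaves are hashed with `h₀`, internal nodes with `h`. -/
def PTree.root (h : α → α → α) (h₀ : β → α) : {k : ℕ} → PTree β k → α
  | 0, .leaf b => h₀ b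
  | _ + 1, .node l r => h (l.root h h₀) (r.root h h₀)

/-- `Mtree`: build the perfect Merkle tree on the `2^k` data blocks indexed by
bit-paths `Fin k → Bool` (`false` = left, `true` = right). -/
def Mtree : (k : ℕ) → ((Fin k → Bool) → β) → PTree β k
  | 0, f => .leaf (f (fun j => j.elim0))
  | k + 1, f =>
      .node (Mtree k (fun q => f (Fin.cons false q))) (Mtree k (fun q => f (Fin.cons true q)))

/-- `Mproof`: the authentication path (list of sibling hashes, root-to-leaf) for the
leaf at bit-path `p`. -/
def Mproof (h : α → α → α) (h₀ : β → α) : {k : ℕ} → PTree β k → (Fin k → Bool) → List α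
  | 0, .leaf _, _ => []
  | _ + 1, .node l r, p =>
      if p 0 then l.root h h₀ :: Mproof h h₀ r (fun j => p j.succ)
      else r.root h h₀ :: Mproof h h₀ l (fun j => p j.succ)

/-- Recompute the candidate root from a leaf hash `cur`, combining with the sibling
hashes in `π` on the side determined by the bits of the index. -/
def computeRoot (h : α → α → α) : List Bool → List α → α → α
  | b :: bs, s :: ss, cur =>
      if b then h s (computeRoot h bs ss cur) else h (computeRoot h bs ss cur) s
  | _, _, cur => cur

/-- `Mvrfy i r x π`: verification succeeds iff recomputing the root from `h₀ x` along
the authentication path `π` (sides given by the bits of `i`) yields `r`. -/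
def Mvrfy (h : α → α → α) (h₀ : β → α) (i : List Bool) (r : α) (x : β) (π : List α) : Prop :=
  π.length = i.length ∧ computeRoot h i π (h₀ x) = r

/-- Merkle verification is complete: for any data blocks and any index, the honestly
generated proof for that index verifies against the Merkle root. -/
theorem merkle_complete (h : α → α → α) (h₀ : β → α) (k : ℕ)
    (data : (Fin k → Bool) → β) (i : Fin k → Bool) :
    Mvrfy h h₀ (List.ofFn i) ((Mtree k data).root h h₀) (data i)
      (Mproof h h₀ (Mtree k data) i) := by
  induction k with
  | zero =>
      refine ⟨rfl, ?_⟩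
      simp only [List.ofFn_zero, Mtree, Mproof, computeRoot, PTree.root]
      exact congrArg h₀ (congrArg data (funext fun j => j.elim0)).symm
  | succ k ih =>
      have hi : data i = data (Fin.cons (i 0) (Fin.tail i)) := by
        rw [Fin.cons_self_tail]
      rw [List.ofFn_succ]
      cases h0 : i 0 with
      | false =>
          obtain ⟨hlen, hroot⟩ := ih (fun q => data (Fin.cons false q)) (Fin.tail i)
          refine ⟨?_, ?_⟩
          · simp only [Mtree, Mproof, h0, Bool.false_eq_true, if_false, List.length_cons,
              List.length_ofFn]
            simp at hlen ⊢
            exact hlen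
          · simp only [Mtree, Mproof, h0, PTree.root, Bool.false_eq_true, if_false, computeRoot]
            rw [hi, h0]
            congr 1
      | true =>
          obtain ⟨hlen, hroot⟩ := ih (fun q => data (Fin.cons true q)) (Fin.tail i)
          refine ⟨?_, ?_⟩
          · simp only [Mtree, Mproof, h0, if_true, List.length_cons, List.length_ofFn]
            simp at hlen ⊢
            exact hlen
          · simp only [Mtree, Mproof, h0, PTree.root, if_true, computeRoot]
            rw [hi, h0]
            congr 1
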